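/- Let F be a convex subset of a Hausdorff locally convex topological vector space X with 0 ∈ int(F), and let Ω be a nonempty convex subset of X. For x̄ ∈ cl_F(Ω), the convex subdifferential of T_Ω^F at x̄ equals N(x̄; cl_F(Ω)) ∩ C*, where C* := {x* ∈ X* | σ_F(−x*) ≤ 1}. -/

import Mathlib

open Set Filter Topology Pointwise

variable {X : Type*} [AddCommGroup X] [Module ℝ X] [TopologicalSpace X]
  [IsTopologicalAddGroup X] [ContinuousSMul ℝ X] [T2Space X] [LocallyConvexSpace ℝ X]

/-- The set of admissible times in the definition of the minimal time function. -/
def timeSet (F Ω : Set X) (x : X) : Set ℝ := {t : ℝ | 0 < t ∧ ∃ f ∈ F, x + t • f ∈ Ω}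

/-- The minimal time function with target Ω and constant dynamics F. -/
noncomputable def minTime (F Ω : Set X) (x : X) : ℝ := sInf (timeSet F Ω x)

/-- The convex subdifferential of the minimal time function at a point. -/
def subdiffMinTime (F Ω : Set X) (x₀ : X) : Set (X →L[ℝ] ℝ) :=
  {p : X →L[ℝ] ℝ | ∀ x : X, p (x - x₀) ≤ minTime F Ω x - minTime F Ω x₀}

/-- The normal cone to a set A at x₀. -/
def normalCone (A : Set X) (x₀ : X) : Set (X →L[ℝ] ℝ) :=
  {p : X →L[ℝ] ℝ | ∀ x ∈ A, p (x - x₀) ≤ 0}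

lemma timeSet_bddBelow (F Ω : Set X) (x : X) : BddBelow (timeSet F Ω x) :=
  ⟨0, fun _ ht => ht.1.le⟩

lemma minTime_nonneg (F Ω : Set X) (x : X) : 0 ≤ minTime F Ω x :=
  Real.sInf_nonneg (fun _ ht => ht.1.le)

lemma minTime_le (F Ω : Set X) {x : X} {t : ℝ} (ht : t ∈ timeSet F Ω x) :
    minTime F Ω x ≤ t :=
  csInf_le (timeSet_bddBelow F Ω x) ht

lemma timeSet_nonempty (F Ω : Set X) (h0 : (0 : X) ∈ interior F) (hΩne : Ω.Nonempty)
    (x : X) : (timeSet F Ω x).Nonempty := by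
  obtain ⟨ω, hω⟩ := hΩne
  have hF : F ∈ 𝓝 (0 : X) := mem_interior_iff_mem_nhds.mp h0
  have hcont : Tendsto (fun s : ℝ => s • (ω - x)) (𝓝[>] 0) (𝓝 (0 : X)) := by
    have h1 : Tendsto (fun s : ℝ => s • (ω - x)) (𝓝 0) (𝓝 ((0 : ℝ) • (ω - x))) :=
      (continuous_id.smul continuous_const).tendsto 0
    simpa using h1.mono_left nhdsWithin_le_nhds
  have hev : ∀ᶠ s in 𝓝[>] (0 : ℝ), s • (ω - x) ∈ F := hcont.eventually_mem hF
  have hpos : ∀ᶠ s in 𝓝[>] (0 : ℝ), 0 < s := eventually_mem_nhdsWithin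
  obtain ⟨s, hsF, hs⟩ := (hev.and hpos).exists
  refine ⟨s⁻¹, inv_pos.mpr hs, s • (ω - x), hsF, ?_⟩
  have : x + s⁻¹ • s • (ω - x) = ω := by
    rw [smul_smul, inv_mul_cancel₀ hs.ne', one_smul]; abel
  rw [this]; exact hω

lemma minTime_eq_zero_of_clF (F Ω : Set X) {y : X}
    (hy : ∀ ε : ℝ, 0 < ε → ∃ ω ∈ Ω, ∃ f ∈ F, y = ω - ε • f) :
    minTime F Ω y = 0 := by
  refine le_antisymm ?_ (minTime_nonneg F Ω y)
  refine le_of_forall_pos_le_add fun ε hε => ?_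
  obtain ⟨ω, hω, f, hf, hyf⟩ := hy ε hε
  have : ε ∈ timeSet F Ω y := ⟨hε, f, hf, by rw [hyf]; simpa using hω⟩
  simpa using minTime_le F Ω this

/-- Subdifferential of the minimal time function at points of the F-closure of the target:
∂T_Ω^F(x̄) = N(x̄; cl_F(Ω)) ∩ C*. -/
theorem subdiff_minTime_at_clF (F Ω : Set X) (hconv : Convex ℝ F)
    (h0 : (0 : X) ∈ interior F) (hΩne : Ω.Nonempty) (hΩ : Convex ℝ Ω) (x₀ : X)
    (hx₀ : x₀ ∈ {y : X | ∀ ε : ℝ, 0 < ε → ∃ ω ∈ Ω, ∃ f ∈ F, y = ω - ε • f}) :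
    subdiffMinTime F Ω x₀ =
      normalCone {y : X | ∀ ε : ℝ, 0 < ε → ∃ ω ∈ Ω, ∃ f ∈ F, y = ω - ε • f} x₀ ∩
        {p : X →L[ℝ] ℝ | ∀ f ∈ F, -(p f) ≤ 1} := by
  have h0F : (0 : X) ∈ F := interior_subset h0
  have hmx₀ : minTime F Ω x₀ = 0 := minTime_eq_zero_of_clF F Ω hx₀
  ext p
  simp only [subdiffMinTime, normalCone, mem_setOf_eq, mem_inter_iff]
  constructor
  · intro hp
    constructor
    · intro y hy
      have := hp y
      rw [hmx₀, minTime_eq_zero_of_clF F Ω hy] at this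
      simpa using this
    · intro f hf
      have key : minTime F Ω (x₀ - f) ≤ 1 := by
        refine le_of_forall_pos_le_add fun ε hε => ?_
        obtain ⟨ω, hω, f', hf', hx⟩ := hx₀ ε hε
        have hpos : (0 : ℝ) < 1 + ε := by linarith
        set g : X := (1 / (1 + ε)) • f + (ε / (1 + ε)) • f' with hg
        have hgF : g ∈ F := by
          refine hconv hf hf' (by positivity) (by positivity) ?_
          field_simp
        have hmem : 1 + ε ∈ timeSet F Ω (x₀ - f) := by
          refine ⟨hpos, g, hgF, ?_⟩
          have hgs : (1 + ε) • g = f + ε • f' := by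
            have c1 : (1 + ε) * (1 / (1 + ε)) = 1 := by field_simp
            have c2 : (1 + ε) * (ε / (1 + ε)) = ε := by field_simp
            rw [hg, smul_add, smul_smul, smul_smul, c1, c2, one_smul]
          rw [hgs]
          have : x₀ - f + (f + ε • f') = ω := by rw [hx]; abel
          rw [this]; exact hω
        exact minTime_le F Ω hmem
      have := hp (x₀ - f)
      rw [hmx₀, sub_zero] at this
      have h1 : p (x₀ - f - x₀) = -(p f) := by
        rw [show x₀ - f - x₀ = -f by abel, map_neg]
      rw [h1] at this
      linarith
  · rintro ⟨hN, hC⟩ x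
    rw [hmx₀, sub_zero]
    refine le_csInf (timeSet_nonempty F Ω h0 hΩne x) ?_
    rintro t ⟨ht, f, hf, hω⟩
    have hωS : ∀ ε : ℝ, 0 < ε → ∃ ω' ∈ Ω, ∃ f' ∈ F, x + t • f = ω' - ε • f' :=
      fun ε hε => ⟨x + t • f, hω, 0, h0F, by simp⟩
    have h1 : p (x + t • f - x₀) ≤ 0 := hN _ hωS
    have h2 : p (x + t • f - x₀) = p (x - x₀) + t * p f := by
      rw [show x + t • f - x₀ = (x - x₀) + t • f by abel, map_add, map_smul]
      rfl
    have h3 : -(p f) ≤ 1 := hC f hf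
    nlinarith
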